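/- For all positive real numbers a, b, c, d, R, S, the inequality R·arcsin(√(ab/((R+a)(R+b)))) + S·arcsin(√(cd/((S+c)(S+d)))) ≤ (R+S)·arcsin(√((a+c)(b+d)/((R+S+a+c)(R+S+b+d)))) holds. -/

import Mathlib

open Real intervalIntegral


/-- Cauchy–Schwarz for square roots: √(x₁y₁)+√(x₂y₂) ≤ √((x₁+x₂)(y₁+y₂)). -/
lemma sqrt_cs {x1 x2 y1 y2 : ℝ} (hx1 : 0 ≤ x1) (hx2 : 0 ≤ x2) (hy1 : 0 ≤ y1)
    (hy2 : 0 ≤ y2) :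
    Real.sqrt (x1*y1) + Real.sqrt (x2*y2) ≤ Real.sqrt ((x1+x2)*(y1+y2)) := by
  have hcross : Real.sqrt (x1*y1) * Real.sqrt (x2*y2) ≤ (x1*y2 + x2*y1)/2 := by
    rw [← Real.sqrt_mul (by positivity)]
    have h1 : x1*y1*(x2*y2) ≤ ((x1*y2 + x2*y1)/2)^2 := by nlinarith [sq_nonneg (x1*y2 - x2*y1)]
    calc Real.sqrt (x1*y1*(x2*y2)) ≤ Real.sqrt (((x1*y2 + x2*y1)/2)^2) := Real.sqrt_le_sqrt h1
      _ = (x1*y2 + x2*y1)/2 := Real.sqrt_sq (by positivity)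
  have key : (Real.sqrt (x1*y1) + Real.sqrt (x2*y2))^2 ≤ (x1+x2)*(y1+y2) := by
    have e1 := Real.sq_sqrt (mul_nonneg hx1 hy1)
    have e2 := Real.sq_sqrt (mul_nonneg hx2 hy2)
    nlinarith [hcross]
  calc Real.sqrt (x1*y1) + Real.sqrt (x2*y2)
      = Real.sqrt ((Real.sqrt (x1*y1) + Real.sqrt (x2*y2))^2) := (Real.sqrt_sq (by positivity)).symm
    _ ≤ Real.sqrt ((x1+x2)*(y1+y2)) := Real.sqrt_le_sqrt key

/-- Cauchy–Schwarz fraction lemma:  (p+q)²/(x+y) ≤ p²/x + q²/y. -/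
lemma div_cs {x y : ℝ} (p q : ℝ) (hx : 0 < x) (hy : 0 < y) :
    (p+q)^2/(x+y) ≤ p^2/x + q^2/y := by
  rw [div_add_div _ _ hx.ne' hy.ne', div_le_div_iff₀ (by positivity) (by positivity)]
  nlinarith [sq_nonneg (p*y - q*x)]

/-- superadditivity of a weighted harmonic mean in three variables. -/
lemma harm3 {w1 w3 x1 x2 x3 y1 y2 y3 : ℝ} (hw1 : 0 ≤ w1) (hw3 : 0 ≤ w3)
    (hx1 : 0 < x1) (hx2 : 0 < x2) (hx3 : 0 < x3)
    (hy1 : 0 < y1) (hy2 : 0 < y2) (hy3 : 0 < y3) :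
    1/(w1/x1 + 1/x2 + w3/x3) + 1/(w1/y1 + 1/y2 + w3/y3) ≤
      1/(w1/(x1+y1) + 1/(x2+y2) + w3/(x3+y3)) := by
  set A := w1/x1 + 1/x2 + w3/x3 with hAdef
  set B := w1/y1 + 1/y2 + w3/y3 with hBdef
  set C := w1/(x1+y1) + 1/(x2+y2) + w3/(x3+y3) with hCdef
  have hA : 0 < A := by positivity
  have hB : 0 < B := by positivity
  have hC : 0 < C := by positivity
  have t1 : (B+A)^2/(x1+y1) ≤ B^2/x1 + A^2/y1 := div_cs B A hx1 hy1
  have t2 : (B+A)^2/(x2+y2) ≤ B^2/x2 + A^2/y2 := div_cs B A hx2 hy2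
  have t3 : (B+A)^2/(x3+y3) ≤ B^2/x3 + A^2/y3 := div_cs B A hx3 hy3
  have key : C * (A+B)^2 ≤ A*B*(A+B) := by
    have e1 : C * (A+B)^2 = w1*((B+A)^2/(x1+y1)) + (B+A)^2/(x2+y2) + w3*((B+A)^2/(x3+y3)) := by
      rw [hCdef]; ring
    have e2 : A*B*(A+B) = w1*(B^2/x1 + A^2/y1) + (B^2/x2 + A^2/y2) + w3*(B^2/x3 + A^2/y3) := by
      rw [hAdef, hBdef]; ring
    rw [e1, e2]
    gcongr
  rw [div_add_div _ _ hA.ne' hB.ne', div_le_div_iff₀ (by positivity) hC]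
  nlinarith [key, mul_pos hA hB]

/-- pointwise inequality for the integrands -/
lemma pointwise_ineq (a b c d R S t : ℝ) (ha : 0 < a) (hb : 0 < b) (hc : 0 < c)
    (hd : 0 < d) (hR : 0 < R) (hS : 0 < S) (ht0 : 0 ≤ t) (ht1 : t ≤ 1) :
    R * Real.sqrt (a*b/((R+a)*(R+b) - a*b*t)) +
      S * Real.sqrt (c*d/((S+c)*(S+d) - c*d*t)) ≤
    (R+S) * Real.sqrt ((a+c)*(b+d)/((R+S+a+c)*(R+S+b+d) - (a+c)*(b+d)*t)) := by
  have hD1 : (0:ℝ) < (R+a)*(R+b) - a*b*t := by nlinarith [mul_pos ha hb]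
  have hD2 : (0:ℝ) < (S+c)*(S+d) - c*d*t := by nlinarith [mul_pos hc hd]
  have hD : (0:ℝ) < (R+S+a+c)*(R+S+b+d) - (a+c)*(b+d)*t := by
    nlinarith [mul_pos (add_pos ha hc) (add_pos hb hd)]
  -- rewrite each term as sqrt of a product
  have e1 : R * Real.sqrt (a*b/((R+a)*(R+b) - a*b*t)) =
      Real.sqrt ((R*a*(R+b)/((R+a)*(R+b) - a*b*t)) * (R*b/(R+b))) := by
    have h : (R*a*(R+b)/((R+a)*(R+b) - a*b*t)) * (R*b/(R+b)) =
        R^2 * (a*b/((R+a)*(R+b) - a*b*t)) := by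
      field_simp
    rw [h, Real.sqrt_mul (by positivity), Real.sqrt_sq hR.le]
  have e2 : S * Real.sqrt (c*d/((S+c)*(S+d) - c*d*t)) =
      Real.sqrt ((S*c*(S+d)/((S+c)*(S+d) - c*d*t)) * (S*d/(S+d))) := by
    have h : (S*c*(S+d)/((S+c)*(S+d) - c*d*t)) * (S*d/(S+d)) =
        S^2 * (c*d/((S+c)*(S+d) - c*d*t)) := by
      field_simp
    rw [h, Real.sqrt_mul (by positivity), Real.sqrt_sq hS.le]
  have e3 : (R+S) * Real.sqrt ((a+c)*(b+d)/((R+S+a+c)*(R+S+b+d) - (a+c)*(b+d)*t)) =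
      Real.sqrt (((R+S)*(a+c)*(R+S+b+d)/((R+S+a+c)*(R+S+b+d) - (a+c)*(b+d)*t)) *
        ((R+S)*(b+d)/(R+S+b+d))) := by
    have h : ((R+S)*(a+c)*(R+S+b+d)/((R+S+a+c)*(R+S+b+d) - (a+c)*(b+d)*t)) *
        ((R+S)*(b+d)/(R+S+b+d)) =
        (R+S)^2 * ((a+c)*(b+d)/((R+S+a+c)*(R+S+b+d) - (a+c)*(b+d)*t)) := by
      field_simp
    rw [h, Real.sqrt_mul (by positivity), Real.sqrt_sq (by positivity)]
  rw [e1, e2, e3]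
  -- superadditivity of the two factor functions
  have hsum1 : R*a*(R+b)/((R+a)*(R+b) - a*b*t) + S*c*(S+d)/((S+c)*(S+d) - c*d*t) ≤
      (R+S)*(a+c)*(R+S+b+d)/((R+S+a+c)*(R+S+b+d) - (a+c)*(b+d)*t) := by
    have h := harm3 (w1 := 1-t) (w3 := t) (x1 := R) (x2 := a) (x3 := R+b)
      (y1 := S) (y2 := c) (y3 := S+d) (by linarith) ht0 hR ha (by positivity)
      hS hc (by positivity)
    have c1 : 1/((1-t)/R + 1/a + t/(R+b)) = R*a*(R+b)/((R+a)*(R+b) - a*b*t) := by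
      rw [show (1-t)/R + 1/a + t/(R+b) = ((R+a)*(R+b) - a*b*t)/(R*a*(R+b)) by
        field_simp; ring]
      rw [one_div_div]
    have c2 : 1/((1-t)/S + 1/c + t/(S+d)) = S*c*(S+d)/((S+c)*(S+d) - c*d*t) := by
      rw [show (1-t)/S + 1/c + t/(S+d) = ((S+c)*(S+d) - c*d*t)/(S*c*(S+d)) by
        field_simp; ring]
      rw [one_div_div]
    have c3 : 1/((1-t)/(R+S) + 1/(a+c) + t/((R+b)+(S+d))) =
        (R+S)*(a+c)*(R+S+b+d)/((R+S+a+c)*(R+S+b+d) - (a+c)*(b+d)*t) := by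
      rw [show (1-t)/(R+S) + 1/(a+c) + t/((R+b)+(S+d)) =
        ((R+S+a+c)*(R+S+b+d) - (a+c)*(b+d)*t)/((R+S)*(a+c)*(R+S+b+d)) by
        field_simp; ring]
      rw [one_div_div]
    rw [c1, c2, c3] at h
    exact h
  have hsum2 : R*b/(R+b) + S*d/(S+d) ≤ (R+S)*(b+d)/(R+S+b+d) := by
    have h := harm3 (w1 := 1) (w3 := 0) (x1 := R) (x2 := b) (x3 := 1)
      (y1 := S) (y2 := d) (y3 := 1) zero_le_one le_rfl hR hb one_pos hS hd one_pos
    simp only [zero_div, add_zero] at h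
    have c1 : 1/(1/R + 1/b) = R*b/(R+b) := by
      rw [show 1/R + 1/b = (R+b)/(R*b) by field_simp; ring, one_div_div]
    have c2 : 1/(1/S + 1/d) = S*d/(S+d) := by
      rw [show 1/S + 1/d = (S+d)/(S*d) by field_simp; ring, one_div_div]
    have c3 : 1/(1/(R+S) + 1/(b+d)) = (R+S)*(b+d)/(R+S+b+d) := by
      rw [show 1/(R+S) + 1/(b+d) = (R+S+b+d)/((R+S)*(b+d)) by field_simp; ring, one_div_div]
    rw [c1, c2, c3] at h
    exact h
  calc Real.sqrt ((R*a*(R+b)/((R+a)*(R+b) - a*b*t)) * (R*b/(R+b))) +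
        Real.sqrt ((S*c*(S+d)/((S+c)*(S+d) - c*d*t)) * (S*d/(S+d)))
      ≤ Real.sqrt ((R*a*(R+b)/((R+a)*(R+b) - a*b*t) + S*c*(S+d)/((S+c)*(S+d) - c*d*t)) *
          (R*b/(R+b) + S*d/(S+d))) := by
        exact sqrt_cs (by positivity) (by positivity) (by positivity) (by positivity)
    _ ≤ Real.sqrt (((R+S)*(a+c)*(R+S+b+d)/((R+S+a+c)*(R+S+b+d) - (a+c)*(b+d)*t)) *
          ((R+S)*(b+d)/(R+S+b+d))) := by
        apply Real.sqrt_le_sqrt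
        apply mul_le_mul hsum1 hsum2 (by positivity) (by positivity)


/-- Integral representation of `R * arcsin √(ab/((R+a)(R+b)))`. -/
lemma arcsin_rep (R a b : ℝ) (hR : 0 < R) (ha : 0 < a) (hb : 0 < b) :
    R * Real.arcsin (Real.sqrt (a*b/((R+a)*(R+b)))) =
      ∫ s in (0:ℝ)..1, R * Real.sqrt (a*b/((R+a)*(R+b) - a*b*s^2)) := by
  have hM : (0:ℝ) < (R+a)*(R+b) := by positivity
  set m := Real.sqrt (a*b/((R+a)*(R+b))) with hmdef
  have harg0 : (0:ℝ) ≤ a*b/((R+a)*(R+b)) := by positivity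
  have harg1 : a*b/((R+a)*(R+b)) < 1 := by
    rw [div_lt_one hM]; nlinarith
  have hm0 : 0 < m := Real.sqrt_pos.mpr (by positivity)
  have hm1 : m < 1 := by
    rw [hmdef, show (1:ℝ) = Real.sqrt 1 by simp]
    exact Real.sqrt_lt_sqrt harg0 (by simpa using harg1)
  have hmsq : m^2 = a*b/((R+a)*(R+b)) := Real.sq_sqrt harg0
  -- FTC: arcsin m = ∫ t in 0..m, 1/√(1-t²)
  have hftc : Real.arcsin m = ∫ t in (0:ℝ)..m, 1/Real.sqrt (1-t^2) := by
    have hd : ∀ t ∈ Set.uIcc (0:ℝ) m, HasDerivAt Real.arcsin (1/Real.sqrt (1-t^2)) t := by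
      intro t ht
      rw [Set.uIcc_of_le hm0.le] at ht
      exact Real.hasDerivAt_arcsin (by linarith [ht.1]) (by linarith [ht.2, hm1])
    have hcont : ContinuousOn (fun t : ℝ => 1/Real.sqrt (1-t^2)) (Set.uIcc (0:ℝ) m) := by
      apply ContinuousOn.div continuousOn_const
      · exact (Real.continuous_sqrt.comp (by continuity)).continuousOn
      · intro t ht
        rw [Set.uIcc_of_le hm0.le] at ht
        have h2 : t^2 < 1 := by nlinarith [ht.1, ht.2, hm1]
        exact (Real.sqrt_pos.mpr (by linarith)).ne'
    have := integral_eq_sub_of_hasDerivAt hd (hcont.intervalIntegrable)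
    rw [this, Real.arcsin_zero, sub_zero]
  -- substitution t = m * s
  have hsub : Real.arcsin m = m * ∫ s in (0:ℝ)..1, 1/Real.sqrt (1-(m*s)^2) := by
    rw [hftc]
    have := smul_integral_comp_mul_left (a := (0:ℝ)) (b := 1)
      (f := fun t : ℝ => 1/Real.sqrt (1-t^2)) m
    rw [mul_zero, mul_one] at this
    rw [← this, smul_eq_mul]
  rw [hsub, ← mul_assoc, ← integral_const_mul]
  apply integral_congr
  intro s hs
  rw [Set.uIcc_of_le zero_le_one] at hs
  have hD1 : (0:ℝ) < (R+a)*(R+b) - a*b*s^2 := by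
    have hs2 : s^2 ≤ 1 := by nlinarith [hs.1, hs.2]
    nlinarith [mul_pos ha hb]
  have h1 : 1 - (m*s)^2 = ((R+a)*(R+b) - a*b*s^2)/((R+a)*(R+b)) := by
    rw [mul_pow, hmsq]; field_simp
  have hMs : Real.sqrt ((R+a)*(R+b)) ≠ 0 := by positivity
  have hD1s : Real.sqrt ((R+a)*(R+b) - a*b*s^2) ≠ 0 := by positivity
  show R * m * (1/Real.sqrt (1-(m*s)^2)) = R * Real.sqrt (a*b/((R+a)*(R+b) - a*b*s^2))
  rw [h1, Real.sqrt_div hD1.le, one_div_div, hmdef,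
    Real.sqrt_div (by positivity : (0:ℝ) ≤ a*b),
    Real.sqrt_div (by positivity : (0:ℝ) ≤ a*b)]
  field_simp


lemma integrand_intervalIntegrable (R a b : ℝ) (hR : 0 < R) (ha : 0 < a) (hb : 0 < b) :
    IntervalIntegrable (fun s : ℝ => R * Real.sqrt (a*b/((R+a)*(R+b) - a*b*s^2)))
      MeasureTheory.volume 0 1 := by
  apply ContinuousOn.intervalIntegrable
  apply ContinuousOn.mul continuousOn_const
  apply Real.continuous_sqrt.comp_continuousOn
  apply ContinuousOn.div continuousOn_const (Continuous.continuousOn (by continuity))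
  intro s hs
  rw [Set.uIcc_of_le zero_le_one] at hs
  have hs2 : s^2 ≤ 1 := by nlinarith [hs.1, hs.2]
  have : (0:ℝ) < (R+a)*(R+b) - a*b*s^2 := by nlinarith [mul_pos ha hb]
  exact this.ne'

theorem circle_packing_arcsin_inequality
    (a b c d R S : ℝ) (ha : 0 < a) (hb : 0 < b) (hc : 0 < c) (hd : 0 < d)
    (hR : 0 < R) (hS : 0 < S) :
    R * Real.arcsin (Real.sqrt (a * b / ((R + a) * (R + b)))) +
      S * Real.arcsin (Real.sqrt (c * d / ((S + c) * (S + d)))) ≤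
    (R + S) * Real.arcsin (Real.sqrt ((a + c) * (b + d) /
      ((R + S + a + c) * (R + S + b + d)))) := by
  have rep1 := arcsin_rep R a b hR ha hb
  have rep2 := arcsin_rep S c d hS hc hd
  have rep3 := arcsin_rep (R+S) (a+c) (b+d) (by positivity) (by positivity) (by positivity)
  rw [show (R+S)+(a+c) = R+S+a+c by ring, show (R+S)+(b+d) = R+S+b+d by ring] at rep3
  rw [rep1, rep2, rep3]
  have h1 := integrand_intervalIntegrable R a b hR ha hb
  have h2 := integrand_intervalIntegrable S c d hS hc hd
  have h3 := integrand_intervalIntegrable (R+S) (a+c) (b+d) (by positivity) (by positivity)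
    (by positivity)
  rw [show R+S+(a+c) = R+S+a+c by ring, show R+S+(b+d) = R+S+b+d by ring] at h3
  rw [← intervalIntegral.integral_add h1 h2]
  apply intervalIntegral.integral_mono_on zero_le_one (h1.add h2) h3
  intro s hs
  exact pointwise_ineq a b c d R S (s^2) ha hb hc hd hR hS (sq_nonneg s)
    (by nlinarith [hs.1, hs.2])
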